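/- Consider the Mathisson–Papapetrou reduction: let C be a geodesic (∇_Ċ Ċ = 0) in a Lorentzian 4-manifold, N_μ = −Ċ_μ with Ċ normalized so N_μ Ċ^μ = 1, and define ξ^{μνλ} = X^λ Ċ^μ Ċ^ν + S^{λ(μ} Ċ^{ν)} where X^μ, S^{μν} are fields along C with X_μ Ċ^μ = 0, Ċ_μ S^{μν} = 0, S^{μν} = −S^{νμ}. Then the quantity N_ν ξ^{μνρ} equals X^ρ Ċ^μ + ½ S^{ρμ}, and the equation ∇_Ċ(N_ν ξ^{μνρ}) = −π^ρ_α ξ^{μα}, with ξ^{μν} = 2 P^{(μ}Ċ^{ν)} − 2m Ċ^μ Ċ^ν and P_μ Ċ^μ = 0, is equivalent to the pair of equations ∇_Ċ X^μ = −P^μ and ∇_Ċ S^{μν} = 0. -/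

import Mathlib

/-- Covariant derivative along the worldline (parameter `s`) of a (1,0) tensor
field along the worldline; `A^μ_ν = Γ^μ_{ρν} Ċ^ρ` is the connection contracted
with the tangent. -/
noncomputable def D1 (A : ℝ → Fin 4 → Fin 4 → ℝ) (T : ℝ → Fin 4 → ℝ) :
    ℝ → Fin 4 → ℝ :=
  fun s μ => deriv (fun t => T t μ) s + ∑ ν, A s μ ν * T s ν

/-- Covariant derivative along the worldline of a (2,0) tensor field. -/
noncomputable def D2 (A : ℝ → Fin 4 → Fin 4 → ℝ) (T : ℝ → Fin 4 → Fin 4 → ℝ) :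
    ℝ → Fin 4 → Fin 4 → ℝ :=
  fun s μ ρ => deriv (fun t => T t μ ρ) s +
    ∑ ν, A s μ ν * T s ν ρ + ∑ ν, A s ρ ν * T s μ ν

/-- Mathisson–Papapetrou reduction (Corollary to Theorem 4.2, algebraic part):
along a geodesic with `N = -Ċ_♭`, `N(Ċ) = 1`, the dipole ansatz
`ξ^{μνλ} = X^λ Ċ^μ Ċ^ν + S^{λ(μ} Ċ^{ν)}` gives
`N_ν ξ^{μνρ} = X^ρ Ċ^μ + ½ S^{ρμ}`, and the dynamical equation
`∇_Ċ(N_ν ξ^{μνρ}) = -π^ρ_α ξ^{μα}` (with `ξ^{μν} = 2P^{(μ}Ċ^{ν)} - 2m Ċ^μ Ċ^ν`)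
is equivalent to `∇_Ċ X = -P` and `∇_Ċ S = 0`. -/
theorem mathisson_papapetrou_reduction
    (A g : ℝ → Fin 4 → Fin 4 → ℝ)
    (Cdot X P : ℝ → Fin 4 → ℝ) (S : ℝ → Fin 4 → Fin 4 → ℝ) (m : ℝ → ℝ)
    (hgsym : ∀ s μ ν, g s μ ν = g s ν μ)
    (hgdiff : ∀ μ ν, Differentiable ℝ fun t => g t μ ν)
    (hXdiff : ∀ μ, Differentiable ℝ fun t => X t μ)
    (hPdiff : ∀ μ, Differentiable ℝ fun t => P t μ)
    (hSdiff : ∀ μ ν, Differentiable ℝ fun t => S t μ ν)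
    (hCdiff : ∀ μ, Differentiable ℝ fun t => Cdot t μ)
    (hgeo : ∀ s μ, D1 A Cdot s μ = 0)
    (hmetric : ∀ s μ ν, deriv (fun t => g t μ ν) s =
      ∑ ρ, A s ρ μ * g s ρ ν + ∑ ρ, A s ρ ν * g s μ ρ)
    (hnorm : ∀ s, ∑ μ, ∑ ν, g s μ ν * Cdot s μ * Cdot s ν = -1)
    (hX : ∀ s, ∑ μ, ∑ ν, g s μ ν * X s μ * Cdot s ν = 0)
    (hP : ∀ s, ∑ μ, ∑ ν, g s μ ν * P s μ * Cdot s ν = 0)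
    (hCS : ∀ s ν, ∑ μ, ∑ ρ, g s ρ μ * Cdot s ρ * S s μ ν = 0)
    (hSanti : ∀ s μ ν, S s μ ν = -(S s ν μ)) :
    let N : ℝ → Fin 4 → ℝ := fun s ν => -∑ μ, g s μ ν * Cdot s μ
    let ξ3 : ℝ → Fin 4 → Fin 4 → Fin 4 → ℝ := fun s μ ν ρ =>
      X s ρ * Cdot s μ * Cdot s ν +
        (S s ρ μ * Cdot s ν + S s ρ ν * Cdot s μ) / 2
    let ξ2 : ℝ → Fin 4 → Fin 4 → ℝ := fun s μ ν =>
      P s μ * Cdot s ν + P s ν * Cdot s μ - 2 * m s * Cdot s μ * Cdot s ν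
    let pr : ℝ → Fin 4 → Fin 4 → ℝ := fun s ρ α =>
      (if ρ = α then (1:ℝ) else 0) - Cdot s ρ * N s α
    (∀ s μ ρ, ∑ ν, N s ν * ξ3 s μ ν ρ = X s ρ * Cdot s μ + S s ρ μ / 2) ∧
    ((∀ s μ ρ, D2 A (fun t μ' ρ' => ∑ ν, N t ν * ξ3 t μ' ν ρ') s μ ρ =
        -∑ α, pr s ρ α * ξ2 s μ α) ↔
      ((∀ s μ, D1 A X s μ = -(P s μ)) ∧ (∀ s μ ν, D2 A S s μ ν = 0))) := by
  intro N ξ3 ξ2 pr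
  -- contraction identities
  have hNC : ∀ s, ∑ μ, N s μ * Cdot s μ = 1 := by
    intro s
    have h := hnorm s
    rw [Finset.sum_comm] at h
    simp only [N, neg_mul, Finset.sum_mul, Finset.sum_neg_distrib]
    rw [h]; norm_num
  have hNP : ∀ s, ∑ μ, N s μ * P s μ = 0 := by
    intro s
    have h : ∑ μ : Fin 4, ∑ ν : Fin 4, g s ν μ * Cdot s ν * P s μ = 0 := by
      rw [← hP s]
      exact Finset.sum_congr rfl fun μ _ => Finset.sum_congr rfl fun ν _ => by
        rw [hgsym s ν μ]; ring
    simp only [N, neg_mul, Finset.sum_mul, Finset.sum_neg_distrib]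
    rw [h]; norm_num
  have hNS1 : ∀ s ν, ∑ μ, N s μ * S s μ ν = 0 := by
    intro s ν
    have h := hCS s ν
    simp only [N, neg_mul, Finset.sum_mul, Finset.sum_neg_distrib]
    rw [h]; norm_num
  have hNS : ∀ s ρ, ∑ μ, N s μ * S s ρ μ = 0 := by
    intro s ρ
    have e : ∑ μ, N s μ * S s ρ μ = -∑ μ, N s μ * S s μ ρ := by
      rw [← Finset.sum_neg_distrib]
      exact Finset.sum_congr rfl fun μ _ => by rw [hSanti s ρ μ]; ring
    rw [e, hNS1 s ρ, neg_zero]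
  -- part 1
  have part1 : ∀ s μ ρ, ∑ ν, N s ν * ξ3 s μ ν ρ = X s ρ * Cdot s μ + S s ρ μ / 2 := by
    intro s μ ρ
    have e : ∀ ν, N s ν * ξ3 s μ ν ρ =
        (X s ρ * Cdot s μ + S s ρ μ / 2) * (N s ν * Cdot s ν)
        + (Cdot s μ / 2) * (N s ν * S s ρ ν) := by
      intro ν; simp only [ξ3]; ring
    rw [Finset.sum_congr rfl fun ν _ => e ν, Finset.sum_add_distrib,
      ← Finset.mul_sum, ← Finset.mul_sum, hNC s, hNS s ρ]
    ring
  -- derivative facts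
  have hCd : ∀ s μ, deriv (fun t => Cdot t μ) s = -∑ ν, A s μ ν * Cdot s ν := by
    intro s μ; have h := hgeo s μ; simp only [D1] at h; linarith
  have hNdiff : ∀ μ, Differentiable ℝ fun t => N t μ := by
    intro μ
    have e : (fun t => N t μ) = fun t => -∑ ν, g t ν μ * Cdot t ν := rfl
    rw [e]
    exact (Differentiable.fun_sum fun ν _ => (hgdiff ν μ).mul (hCdiff ν)).fun_neg
  have hNd : ∀ s μ, deriv (fun t => N t μ) s = ∑ ρ, A s ρ μ * N s ρ := by
    intro s μ
    have e1 : deriv (fun t => N t μ) s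
        = -∑ ν, (deriv (fun t => g t ν μ) s * Cdot s ν
            + g s ν μ * deriv (fun t => Cdot t ν) s) := by
      simp only [N]
      rw [deriv.fun_neg]
      congr 1
      rw [deriv_fun_sum (fun ν _ => ((hgdiff ν μ) s).fun_mul ((hCdiff ν) s))]
      exact Finset.sum_congr rfl fun ν _ => deriv_fun_mul ((hgdiff ν μ) s) ((hCdiff ν) s)
    rw [e1]
    have e2 : ∀ ν, deriv (fun t => g t ν μ) s * Cdot s ν
        + g s ν μ * deriv (fun t => Cdot t ν) s
        = (∑ ρ, A s ρ ν * g s ρ μ) * Cdot s ν + (∑ ρ, A s ρ μ * g s ν ρ) * Cdot s ν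
          + g s ν μ * (-∑ σ, A s ν σ * Cdot s σ) := by
      intro ν; rw [hmetric s ν μ, hCd s ν]; ring
    rw [Finset.sum_congr rfl fun ν _ => e2 ν]
    have c1 : ∑ ν, (∑ ρ, A s ρ ν * g s ρ μ) * Cdot s ν
        = ∑ ν, g s ν μ * ∑ σ, A s ν σ * Cdot s σ := by
      simp only [Finset.sum_mul, Finset.mul_sum]
      rw [Finset.sum_comm]
      exact Finset.sum_congr rfl fun ν _ => Finset.sum_congr rfl fun σ _ => by ring
    have c2 : ∑ ν, (∑ ρ, A s ρ μ * g s ν ρ) * Cdot s ν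
        = ∑ ρ, A s ρ μ * ∑ ν, g s ν ρ * Cdot s ν := by
      simp only [Finset.sum_mul, Finset.mul_sum]
      rw [Finset.sum_comm]
      exact Finset.sum_congr rfl fun ρ _ => Finset.sum_congr rfl fun ν _ => by ring
    have c3 : ∑ ν, g s ν μ * (-∑ σ, A s ν σ * Cdot s σ)
        = -∑ ν, g s ν μ * ∑ σ, A s ν σ * Cdot s σ := by
      rw [← Finset.sum_neg_distrib]
      exact Finset.sum_congr rfl fun ν _ => by ring
    rw [Finset.sum_add_distrib, Finset.sum_add_distrib, c1, c2, c3]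
    have c4 : ∑ ρ, A s ρ μ * N s ρ = -∑ ρ, A s ρ μ * ∑ ν, g s ν ρ * Cdot s ν := by
      rw [← Finset.sum_neg_distrib]
      exact Finset.sum_congr rfl fun ρ _ => by simp only [N]; ring
    rw [c4]; ring
  -- derivative of the vanishing contraction N·S
  have hDZ : ∀ s ρ, ∑ μ, (deriv (fun t => N t μ) s * S s ρ μ
      + N s μ * deriv (fun t => S t ρ μ) s) = 0 := by
    intro s ρ
    have h0 : (fun t => ∑ μ, N t μ * S t ρ μ) = fun _ => (0:ℝ) :=
      funext fun t => hNS t ρ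
    have hz : deriv (fun t => ∑ μ, N t μ * S t ρ μ) s = 0 := by
      rw [h0]; simp
    rw [deriv_fun_sum (fun μ _ => ((hNdiff μ) s).fun_mul ((hSdiff ρ μ) s))] at hz
    rw [← hz]
    exact Finset.sum_congr rfl fun μ _ =>
      (deriv_fun_mul ((hNdiff μ) s) ((hSdiff ρ μ) s)).symm
  -- contraction of N with D2 S vanishes
  have hNDS : ∀ s ρ, ∑ μ, N s μ * D2 A S s ρ μ = 0 := by
    intro s ρ
    simp only [D2]
    have e : ∀ μ, N s μ * (deriv (fun t => S t ρ μ) s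
        + ∑ ν, A s ρ ν * S s ν μ + ∑ ν, A s μ ν * S s ρ ν)
        = N s μ * deriv (fun t => S t ρ μ) s
          + ∑ ν, N s μ * (A s ρ ν * S s ν μ) + ∑ ν, N s μ * (A s μ ν * S s ρ ν) := by
      intro μ
      rw [mul_add, mul_add, Finset.mul_sum, Finset.mul_sum]
    rw [Finset.sum_congr rfl fun μ _ => e μ, Finset.sum_add_distrib,
      Finset.sum_add_distrib]
    have hT2 : ∑ μ, ∑ ν, N s μ * (A s ρ ν * S s ν μ) = 0 := by
      rw [Finset.sum_comm]
      have e2 : ∀ ν : Fin 4, ∑ μ, N s μ * (A s ρ ν * S s ν μ)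
          = A s ρ ν * ∑ μ, N s μ * S s ν μ := by
        intro ν
        rw [Finset.mul_sum]
        exact Finset.sum_congr rfl fun μ _ => by ring
      rw [Finset.sum_congr rfl fun ν _ => e2 ν]
      simp [hNS]
    have hT1 : ∑ μ, N s μ * deriv (fun t => S t ρ μ) s
        = -∑ μ, (∑ σ, A s σ μ * N s σ) * S s ρ μ := by
      have h1 := hDZ s ρ
      rw [Finset.sum_add_distrib] at h1
      have e3 : ∑ μ, deriv (fun t => N t μ) s * S s ρ μ
          = ∑ μ, (∑ σ, A s σ μ * N s σ) * S s ρ μ :=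
        Finset.sum_congr rfl fun μ _ => by rw [hNd s μ]
      linarith
    have hT3 : ∑ μ, ∑ ν, N s μ * (A s μ ν * S s ρ ν)
        = ∑ μ, (∑ σ, A s σ μ * N s σ) * S s ρ μ := by
      rw [Finset.sum_comm]
      refine Finset.sum_congr rfl fun ν _ => ?_
      rw [Finset.sum_mul]
      exact Finset.sum_congr rfl fun σ _ => by ring
    rw [hT1, hT2, hT3]; ring
  -- LHS of the dynamical equation
  have hLHS : ∀ s μ ρ, D2 A (fun t μ' ρ' => ∑ ν, N t ν * ξ3 t μ' ν ρ') s μ ρ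
      = Cdot s μ * D1 A X s ρ + D2 A S s ρ μ / 2 := by
    intro s μ ρ
    simp only [D2, D1, part1]
    rw [deriv_fun_add (((hXdiff ρ) s).fun_mul ((hCdiff μ) s)) (((hSdiff ρ μ) s).div_const 2),
      deriv_fun_mul ((hXdiff ρ) s) ((hCdiff μ) s), deriv_div_const, hCd s μ]
    have e2 : ∀ ν, A s μ ν * (X s ρ * Cdot s ν + S s ρ ν / 2)
        = X s ρ * (A s μ ν * Cdot s ν) + (A s μ ν * S s ρ ν) / 2 := fun ν => by ring
    have e3 : ∀ ν, A s ρ ν * (X s ν * Cdot s μ + S s ν μ / 2)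
        = Cdot s μ * (A s ρ ν * X s ν) + (A s ρ ν * S s ν μ) / 2 := fun ν => by ring
    rw [Finset.sum_congr rfl fun ν _ => e2 ν, Finset.sum_congr rfl fun ν _ => e3 ν,
      Finset.sum_add_distrib, Finset.sum_add_distrib, ← Finset.mul_sum,
      ← Finset.mul_sum, ← Finset.sum_div, ← Finset.sum_div]
    ring
  -- RHS of the dynamical equation
  have hRHS : ∀ s μ ρ, ∑ α, pr s ρ α * ξ2 s μ α = P s ρ * Cdot s μ := by
    intro s μ ρ
    have e : ∀ α, pr s ρ α * ξ2 s μ α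
        = (if ρ = α then (1:ℝ) else 0) * ξ2 s μ α
          - (Cdot s ρ * P s μ - 2 * m s * Cdot s ρ * Cdot s μ) * (N s α * Cdot s α)
          - (Cdot s ρ * Cdot s μ) * (N s α * P s α) := by
      intro α; simp only [pr, ξ2]; ring
    rw [Finset.sum_congr rfl fun α _ => e α, Finset.sum_sub_distrib,
      Finset.sum_sub_distrib, ← Finset.mul_sum, ← Finset.mul_sum, hNC s, hNP s]
    have hι : ∑ α, (if ρ = α then (1:ℝ) else 0) * ξ2 s μ α = ξ2 s μ ρ := by
      simp
    rw [hι]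
    simp only [ξ2]; ring
  refine ⟨part1, ?_, ?_⟩
  · intro h
    have hD1 : ∀ s μ, D1 A X s μ = -(P s μ) := by
      intro s ρ
      have h2 : ∀ μ, Cdot s μ * D1 A X s ρ + D2 A S s ρ μ / 2
          = -(P s ρ * Cdot s μ) := by
        intro μ
        have h3 := h s μ ρ
        rw [hLHS s μ ρ, hRHS s μ ρ] at h3
        exact h3
      have h4 : ∑ μ, N s μ * (Cdot s μ * D1 A X s ρ + D2 A S s ρ μ / 2)
          = ∑ μ, N s μ * (-(P s ρ * Cdot s μ)) :=
        Finset.sum_congr rfl fun μ _ => by rw [h2 μ]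
      have l : ∑ μ, N s μ * (Cdot s μ * D1 A X s ρ + D2 A S s ρ μ / 2)
          = D1 A X s ρ * (∑ μ, N s μ * Cdot s μ)
            + (∑ μ, N s μ * D2 A S s ρ μ) / 2 := by
        rw [Finset.mul_sum, Finset.sum_div, ← Finset.sum_add_distrib]
        exact Finset.sum_congr rfl fun μ _ => by ring
      have r : ∑ μ, N s μ * (-(P s ρ * Cdot s μ))
          = -(P s ρ * ∑ μ, N s μ * Cdot s μ) := by
        rw [Finset.mul_sum, ← Finset.sum_neg_distrib]
        exact Finset.sum_congr rfl fun μ _ => by ring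
      rw [l, r, hNC s, hNDS s ρ] at h4
      linarith
    refine ⟨hD1, ?_⟩
    intro s μ ν
    have h3 := h s ν μ
    rw [hLHS s ν μ, hRHS s ν μ, hD1 s μ] at h3
    linear_combination 2 * h3
  · rintro ⟨h1, h2⟩ s μ ρ
    rw [hLHS s μ ρ, hRHS s μ ρ, h1 s ρ, h2 s ρ μ]
    ring
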